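/- Extended Gronwall lemma: let f : [a,b] → ℝ be continuous with (1/2) f(t)² ≤ (1/2) f₀² + ∫_a^t Ψ(τ) f(τ) dτ for all t ∈ [a,b], where f₀ ∈ ℝ and Ψ ≥ 0 is continuous. Then (1/2)|f(t)| ≤ (1/2)|f₀| + ∫_a^t Ψ(τ) dτ for all t ∈ [a,b]. -/

import Mathlib

open Set intervalIntegral

/-- **Extended Gronwall lemma.**  Let `f : [a,b] → ℝ` be continuous with
`(1/2) f(t)² ≤ (1/2) f₀² + ∫_a^t Ψ(τ) f(τ) dτ` for all `t ∈ [a,b]`, where `Ψ ≥ 0` is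
continuous.  Then `(1/2)|f(t)| ≤ (1/2)|f₀| + ∫_a^t Ψ(τ) dτ` for all `t ∈ [a,b]`. -/
theorem extended_gronwall
    (a b : ℝ) (hab : a ≤ b) (f Ψ : ℝ → ℝ) (f₀ : ℝ)
    (hf : ContinuousOn f (Icc a b))
    (hΨ : ContinuousOn Ψ (Icc a b))
    (hΨ0 : ∀ t ∈ Icc a b, 0 ≤ Ψ t)
    (h : ∀ t ∈ Icc a b,
        (1 / 2) * (f t) ^ 2 ≤ (1 / 2) * f₀ ^ 2 + ∫ τ in a..t, Ψ τ * f τ) :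
    ∀ t ∈ Icc a b, (1 / 2) * |f t| ≤ (1 / 2) * |f₀| + ∫ τ in a..t, Ψ τ := by
  set F : ℝ → ℝ := IccExtend hab ((Icc a b).restrict f) with hFdef
  set P : ℝ → ℝ := IccExtend hab ((Icc a b).restrict Ψ) with hPdef
  have hFc : Continuous F := continuous_IccExtend_iff.mpr
    (continuousOn_iff_continuous_restrict.mp hf)
  have hPc : Continuous P := continuous_IccExtend_iff.mpr
    (continuousOn_iff_continuous_restrict.mp hΨ)
  have hFeq : ∀ t ∈ Icc a b, F t = f t := fun t ht => by
    simp [hFdef, IccExtend_of_mem hab _ ht]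
    rfl
  have hPeq : ∀ t ∈ Icc a b, P t = Ψ t := fun t ht => by
    simp [hPdef, IccExtend_of_mem hab _ ht]
    rfl
  have hP0 : ∀ t ∈ Icc a b, 0 ≤ P t := fun t ht => (hPeq t ht) ▸ hΨ0 t ht
  intro t ht
  have hsub : Icc a t ⊆ Icc a b := Icc_subset_Icc le_rfl ht.2
  have huIcc : ∀ s ∈ Icc a b, uIcc a s = Icc a s := fun s hs =>
    uIcc_of_le hs.1
  -- integrals over extended functions agree
  have hIeq : ∀ s ∈ Icc a b, (∫ τ in a..s, P τ * F τ) = ∫ τ in a..s, Ψ τ * f τ := by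
    intro s hs
    refine integral_congr fun τ hτ => ?_
    rw [huIcc s hs] at hτ
    have hτ' : τ ∈ Icc a b := (Icc_subset_Icc le_rfl hs.2) hτ
    rw [hFeq τ hτ', hPeq τ hτ']
  have hIeqΨ : (∫ τ in a..t, P τ) = ∫ τ in a..t, Ψ τ := by
    refine integral_congr fun τ hτ => ?_
    rw [huIcc t ht] at hτ
    exact hPeq τ (hsub hτ)
  -- key estimate with ε
  have key : ∀ ε > 0, |f t| ≤ Real.sqrt (f₀ ^ 2 + ε) + ∫ τ in a..t, P τ := by
    intro ε hε
    set g : ℝ → ℝ := fun s => f₀ ^ 2 + ε + 2 * ∫ τ in a..s, P τ * F τ with hgdef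
    have hgderiv : ∀ s : ℝ, HasDerivAt g (2 * (P s * F s)) s := by
      intro s
      exact (((hPc.mul hFc).integral_hasStrictDerivAt a s).hasDerivAt.const_mul 2).const_add _
    have hgc : Continuous g := by
      fun_prop
    have hglb : ∀ s ∈ Icc a b, F s ^ 2 + ε ≤ g s := by
      intro s hs
      have := h s hs
      rw [← hIeq s hs] at this
      have hF2 : F s ^ 2 = f s ^ 2 := by rw [hFeq s hs]
      simp only [hgdef]
      nlinarith [this, hF2]
    have hgpos : ∀ s ∈ Icc a b, 0 < g s := fun s hs =>
      lt_of_lt_of_le (by positivity) (hglb s hs)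
    set G : ℝ → ℝ := fun s => Real.sqrt (g s) with hGdef
    set D : ℝ → ℝ := fun s => P s * F s / Real.sqrt (g s) with hDdef
    have hGderiv : ∀ s ∈ Icc a b, HasDerivAt G (D s) s := by
      intro s hs
      have hd := (hgderiv s).sqrt (ne_of_gt (hgpos s hs))
      convert hd using 1
      rw [hDdef]
      have h1 : Real.sqrt (g s) ≠ 0 := ne_of_gt (Real.sqrt_pos.mpr (hgpos s hs))
      field_simp
    -- derivative bound
    have hDle : ∀ s ∈ Icc a b, D s ≤ P s := by
      intro s hs
      have h1 : 0 < Real.sqrt (g s) := Real.sqrt_pos.mpr (hgpos s hs)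
      rw [hDdef, div_le_iff₀ h1]
      have h2 : F s ≤ Real.sqrt (g s) := by
        calc F s ≤ |F s| := le_abs_self _
        _ = Real.sqrt (F s ^ 2) := by rw [Real.sqrt_sq_eq_abs]
        _ ≤ Real.sqrt (g s) := Real.sqrt_le_sqrt (by nlinarith [hglb s hs])
      calc P s * F s ≤ P s * Real.sqrt (g s) :=
        mul_le_mul_of_nonneg_left h2 (hP0 s hs)
      _ = _ := rfl
    have hDcont : ContinuousOn D (Icc a t) := by
      apply ContinuousOn.div ((hPc.mul hFc).continuousOn) ((hgc.continuousOn).sqrt)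
      intro s hs
      exact ne_of_gt (Real.sqrt_pos.mpr (hgpos s (hsub hs)))
    have hftc : G t - G a = ∫ τ in a..t, D τ := by
      refine (integral_eq_sub_of_hasDerivAt ?_ ?_).symm
      · intro s hs
        rw [huIcc t ht] at hs
        exact hGderiv s (hsub hs)
      · rw [intervalIntegrable_iff_integrableOn_Icc_of_le ht.1]
        exact hDcont.integrableOn_compact isCompact_Icc
    have hmono : (∫ τ in a..t, D τ) ≤ ∫ τ in a..t, P τ := by
      apply integral_mono_on ht.1
      · rw [intervalIntegrable_iff_integrableOn_Icc_of_le ht.1]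
        exact hDcont.integrableOn_compact isCompact_Icc
      · exact hPc.intervalIntegrable a t
      · intro s hs
        exact hDle s (hsub hs)
    have hGa : G a = Real.sqrt (f₀ ^ 2 + ε) := by
      simp [hGdef, hgdef]
    have hfG : |f t| ≤ G t := by
      rw [← hFeq t ht, hGdef, ← Real.sqrt_sq_eq_abs]
      exact Real.sqrt_le_sqrt (by nlinarith [hglb t ht])
    calc |f t| ≤ G t := hfG
    _ = G a + (G t - G a) := by ring
    _ = G a + ∫ τ in a..t, D τ := by rw [hftc]
    _ ≤ Real.sqrt (f₀ ^ 2 + ε) + ∫ τ in a..t, P τ := by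
        rw [hGa]; linarith [hmono]
  -- pass to the limit ε → 0
  have hmain : |f t| ≤ |f₀| + ∫ τ in a..t, Ψ τ := by
    refine le_of_forall_pos_le_add fun δ hδ => ?_
    have hk := key (δ ^ 2) (by positivity)
    have hsq : Real.sqrt (f₀ ^ 2 + δ ^ 2) ≤ |f₀| + δ := by
      have h2 : Real.sqrt (f₀ ^ 2 + δ ^ 2) ≤ Real.sqrt ((|f₀| + δ) ^ 2) :=
        Real.sqrt_le_sqrt (by nlinarith [abs_nonneg f₀, sq_abs f₀])
      rwa [Real.sqrt_sq (by positivity)] at h2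
    rw [hIeqΨ] at hk
    linarith
  have hInn : 0 ≤ ∫ τ in a..t, Ψ τ :=
    integral_nonneg ht.1 fun τ hτ => hΨ0 τ (hsub hτ)
  linarith
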